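/- Robust calibration coverage: let (X_i, Y_i), i = 1,…,n+1, be i.i.d. with values in X × Y, S a measurable score, and define W_i = sup_{x' ∈ B_ε(X_i)} S(x', Y_i). If q is the ⌈(1−α)(n+1)⌉-th smallest of W_1,…,W_n (or +∞ if this exceeds n), then P(S(X_{n+1} + δ, Y_{n+1}) ≤ q) ≥ 1 − α for any perturbation δ with ‖δ‖ ≤ ε, assuming W_1,…,W_{n+1} almost surely have no ties. -/

import Mathlib

open MeasureTheory
open scoped ENNReal

/-- Worst-case (robust) score over the `ε`-ball around the input of a data point. -/
noncomputable def robustScore {X Y : Type*} [NormedAddCommGroup X]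
    (S : X → Y → ℝ) (ε : ℝ) (p : X × Y) : ℝ :=
  sSup ((fun x' => S x' p.2) '' Metric.closedBall p.1 ε)

/-- The `k`-th order statistic (0-indexed) of a finite real tuple. -/
noncomputable def orderStat' {n : ℕ} (v : Fin n → ℝ) (k : Fin n) : ℝ :=
  v (Tuple.sort v k)

/-- The rank (number of strictly smaller entries) of coordinate `m` in the tuple `v`. -/
noncomputable def rankN {n : ℕ} (v : Fin n → ℝ) (m : Fin n) : ℕ :=
  (Finset.univ.filter (fun i => v i < v m)).card

lemma rankN_le {n : ℕ} (v : Fin (n+1) → ℝ) (m : Fin (n+1)) : rankN v m ≤ n := by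
  have hsub : (Finset.univ.filter (fun i => v i < v m)) ⊆ Finset.univ.erase m := by
    intro i hi
    simp only [Finset.mem_filter, Finset.mem_univ, true_and] at hi
    refine Finset.mem_erase.mpr ⟨?_, Finset.mem_univ i⟩
    rintro rfl; exact lt_irrefl _ hi
  calc rankN v m ≤ (Finset.univ.erase m).card := Finset.card_le_card hsub
    _ = n := by
        rw [Finset.card_erase_of_mem (Finset.mem_univ m), Finset.card_univ,
          Fintype.card_fin]
        omega

noncomputable def rankF {n : ℕ} (v : Fin (n+1) → ℝ) (m : Fin (n+1)) : Fin (n+1) :=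
  ⟨rankN v m, Nat.lt_succ_of_le (rankN_le v m)⟩

lemma rankN_lt_of_lt {n : ℕ} (v : Fin n → ℝ) {a b : Fin n} (hab : v a < v b) :
    rankN v a < rankN v b := by
  apply Finset.card_lt_card
  constructor
  · intro i hi
    simp only [Finset.mem_filter, Finset.mem_univ, true_and] at *
    exact lt_trans hi hab
  · intro hsub
    have := hsub (Finset.mem_filter.mpr ⟨Finset.mem_univ a, hab⟩)
    simp only [Finset.mem_filter, Finset.mem_univ, true_and] at this
    exact lt_irrefl _ this

lemma rankF_bijective {n : ℕ} {v : Fin (n+1) → ℝ} (hv : Function.Injective v) :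
    Function.Bijective (rankF v) := by
  rw [Fintype.bijective_iff_injective_and_card]
  refine ⟨?_, rfl⟩
  intro a b hab
  rcases lt_trichotomy (v a) (v b) with h | h | h
  · have := rankN_lt_of_lt v h
    have h2 : rankN v a = rankN v b := congrArg Fin.val hab
    omega
  · exact hv h
  · have := rankN_lt_of_lt v h
    have h2 : rankN v a = rankN v b := congrArg Fin.val hab
    omega

lemma le_orderStat_of_card_le {n : ℕ} (w : Fin n → ℝ) (t : ℝ) (k : ℕ) (hk : k < n)
    (hcount : (Finset.univ.filter (fun i => w i < t)).card ≤ k) :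
    t ≤ orderStat' w ⟨k, hk⟩ := by
  by_contra hlt
  push_neg at hlt
  unfold orderStat' at hlt
  have hmono := Tuple.monotone_sort w
  have hsub : (Finset.Iic (⟨k, hk⟩ : Fin n)).image (Tuple.sort w) ⊆
      Finset.univ.filter (fun i => w i < t) := by
    intro i hi
    simp only [Finset.mem_image, Finset.mem_Iic] at hi
    obtain ⟨j, hj, rfl⟩ := hi
    refine Finset.mem_filter.mpr ⟨Finset.mem_univ _, ?_⟩
    exact lt_of_le_of_lt (hmono hj) hlt
  have hcard : k + 1 ≤ (Finset.univ.filter (fun i => w i < t)).card := by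
    calc k + 1 = (Finset.Iic (⟨k, hk⟩ : Fin n)).card := by rw [Fin.card_Iic]
      _ = ((Finset.Iic (⟨k, hk⟩ : Fin n)).image (Tuple.sort w)).card :=
          (Finset.card_image_of_injective _ (Equiv.injective _)).symm
      _ ≤ _ := Finset.card_le_card hsub
  omega

lemma rankN_last {n : ℕ} (v : Fin (n+1) → ℝ) :
    rankN v (Fin.last n)
      = (Finset.univ.filter (fun i : Fin n => v i.castSucc < v (Fin.last n))).card := by
  unfold rankN
  rw [Finset.card_filter, Finset.card_filter, Fin.sum_univ_castSucc]
  simp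

lemma rankN_comp {n : ℕ} (v : Fin n → ℝ) (e : Equiv.Perm (Fin n)) (m : Fin n) :
    rankN (v ∘ e) m = rankN v (e m) := by
  unfold rankN
  apply Finset.card_bij' (fun i _ => e i) (fun i _ => e.symm i) <;>
    simp [Function.comp]

lemma measurable_rankN {n : ℕ} (m : Fin n) :
    Measurable (fun v : Fin n → ℝ => rankN v m) := by
  unfold rankN
  simp_rw [Finset.card_filter]
  apply Finset.measurable_sum
  intro i _
  exact Measurable.ite (measurableSet_lt (measurable_pi_apply i) (measurable_pi_apply m))
    measurable_const measurable_const

lemma measurableSet_inj {n : ℕ} :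
    MeasurableSet {v : Fin n → ℝ | Function.Injective v} := by
  have : {v : Fin n → ℝ | Function.Injective v}
      = ⋂ (i) (j) (_ : i ≠ j), {v : Fin n → ℝ | v i ≠ v j} := by
    ext v
    simp only [Set.mem_setOf_eq, Set.mem_iInter, Function.Injective]
    constructor
    · intro h i j hij hvij; exact hij (h hvij)
    · intro h a b hab; by_contra hne; exact h a b hne hab
  rw [this]
  refine MeasurableSet.iInter fun i => MeasurableSet.iInter fun j =>
    MeasurableSet.iInter fun _ => ?_
  exact (measurableSet_eq_fun (measurable_pi_apply i) (measurable_pi_apply j)).compl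

lemma map_perm_eq_pi {Ω : Type*} [MeasurableSpace Ω] (P : Measure Ω) [IsProbabilityMeasure P]
    {n : ℕ} (W : Fin n → Ω → ℝ) (hW : ∀ i, Measurable (W i))
    (hindep : ProbabilityTheory.iIndepFun W P)
    (ν : Measure ℝ) [IsProbabilityMeasure ν] (hident : ∀ i, P.map (W i) = ν)
    (e : Equiv.Perm (Fin n)) :
    P.map (fun ω i => W (e i) ω) = Measure.pi (fun _ => ν) := by
  refine (Measure.pi_eq fun s hs => ?_).symm
  have hF : Measurable (fun ω i => W (e i) ω) :=
    measurable_pi_lambda _ fun i => hW (e i)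
  rw [Measure.map_apply hF (MeasurableSet.univ_pi hs)]
  have hpre : (fun ω i => W (e i) ω) ⁻¹' Set.univ.pi s
      = ⋂ j ∈ Finset.univ, W j ⁻¹' s (e.symm j) := by
    ext ω
    simp only [Set.mem_preimage, Set.mem_pi, Set.mem_univ, true_implies,
      Set.mem_iInter, Finset.mem_univ, Set.mem_preimage]
    constructor
    · intro h j
      have := h (e.symm j)
      rwa [Equiv.apply_symm_apply] at this
    · intro h i
      have := h (e i)
      rwa [Equiv.symm_apply_apply] at this
  rw [hpre, hindep.measure_inter_preimage_eq_mul Finset.univ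
    (sets := fun j => s (e.symm j)) (fun j _ => hs (e.symm j))]
  calc ∏ j, P (W j ⁻¹' s (e.symm j)) = ∏ j, ν (s (e.symm j)) := by
        refine Finset.prod_congr rfl fun j _ => ?_
        rw [← hident j, Measure.map_apply (hW j) (hs (e.symm j))]
    _ = ∏ i, ν (s i) := Equiv.prod_comp e.symm (fun i => ν (s i))

theorem stmt_10 {Ω X Y : Type*} [MeasurableSpace Ω]
    [NormedAddCommGroup X] [MeasurableSpace X] [MeasurableSpace Y]
    (P : Measure Ω) [IsProbabilityMeasure P]
    (n : ℕ) (hn : 0 < n) (α : ℝ) (hα : α ∈ Set.Ioo (0:ℝ) 1)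
    (ε : ℝ) (hε : 0 < ε) (δ : X) (hδ : ‖δ‖ ≤ ε)
    (S : X → Y → ℝ) (hS : Measurable (fun p : X × Y => S p.1 p.2))
    (hSrob : Measurable (fun p : X × Y => robustScore S ε p))
    (hbdd : ∀ (x : X) (y : Y), BddAbove ((fun x' => S x' y) '' Metric.closedBall x ε))
    (Z : Fin (n + 1) → Ω → X × Y) (hZmeas : ∀ i, Measurable (Z i))
    (hindep : ProbabilityTheory.iIndepFun Z P)
    (hident : ∀ i j, Measure.map (Z i) P = Measure.map (Z j) P)
    (hties : ∀ i j, i ≠ j →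
      P {ω | robustScore S ε (Z i ω) = robustScore S ε (Z j ω)} = 0) :
    1 - α ≤ (P {ω |
      if h : ⌈(1 - α) * (n + 1)⌉₊ ≤ n then
        S ((Z (Fin.last n) ω).1 + δ) (Z (Fin.last n) ω).2 ≤
          orderStat' (fun i : Fin n => robustScore S ε (Z (Fin.castSucc i) ω))
            ⟨⌈(1 - α) * (n + 1)⌉₊ - 1, by omega⟩
      else True}).toReal := by
  by_cases hkn : ⌈(1 - α) * (n + 1)⌉₊ ≤ n
  case neg =>
    simp only [dif_neg hkn]
    have h1 : {ω : Ω | True} = Set.univ := by ext; simp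
    rw [h1, measure_univ, ENNReal.toReal_one]
    linarith [hα.1]
  case pos =>
    simp only [dif_pos hkn]
    set k := ⌈(1 - α) * (n + 1 : ℝ)⌉₊ with hk_def
    have hk1 : 1 ≤ k := by
      rw [hk_def]
      refine Nat.one_le_iff_ne_zero.mpr (Nat.ceil_pos.mpr ?_).ne'
      have h1 : 0 < 1 - α := by linarith [hα.2]
      positivity
    set W : Fin (n+1) → Ω → ℝ := fun i ω => robustScore S ε (Z i ω) with hW_def
    have hWmeas : ∀ i, Measurable (W i) := fun i => hSrob.comp (hZmeas i)
    have hWindep : ProbabilityTheory.iIndepFun W P :=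
      hindep.comp _ (fun _ => hSrob)
    set ν : Measure ℝ := P.map (W 0) with hν_def
    haveI hνP : IsProbabilityMeasure ν :=
      Measure.isProbabilityMeasure_map (hWmeas 0).aemeasurable
    have hWident : ∀ i, P.map (W i) = ν := by
      intro i
      rw [hν_def, hW_def]
      show P.map ((fun p => robustScore S ε p) ∘ Z i)
          = P.map ((fun p => robustScore S ε p) ∘ Z 0)
      rw [← Measure.map_map hSrob (hZmeas i), ← Measure.map_map hSrob (hZmeas 0), hident i 0]
    set μ : Measure (Fin (n+1) → ℝ) := Measure.pi (fun _ => ν) with hμ_def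
    haveI hμP : IsProbabilityMeasure μ := by rw [hμ_def]; infer_instance
    have hjoint : ∀ e : Equiv.Perm (Fin (n+1)),
        P.map (fun ω i => W (e i) ω) = μ :=
      fun e => map_perm_eq_pi P W hWmeas hWindep ν hWident e
    have hjoint0 : P.map (fun ω i => W i ω) = μ := by
      have h := hjoint (Equiv.refl _)
      simpa using h
    set Wvec : Ω → (Fin (n+1) → ℝ) := fun ω i => W i ω with hWvec_def
    have hWvec_meas : Measurable Wvec := measurable_pi_lambda _ hWmeas
    set Inj : Set (Fin (n+1) → ℝ) := {v | Function.Injective v} with hInj_def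
    set D : ℕ → Fin (n+1) → Set (Fin (n+1) → ℝ) :=
      fun j m => Inj ∩ {v | rankN v m = j} with hD_def
    have hDmeas : ∀ j m, MeasurableSet (D j m) := fun j m =>
      measurableSet_inj.inter ((measurable_rankN m) (measurableSet_singleton j))
    -- the no-ties set has full measure
    have hInjc : μ Injᶜ = 0 := by
      rw [← hjoint0, Measure.map_apply hWvec_meas measurableSet_inj.compl]
      have hsub : Wvec ⁻¹' Injᶜ ⊆ ⋃ (i) (j), {ω : Ω | i ≠ j ∧ W i ω = W j ω} := by
        intro ω hω
        simp only [Set.mem_preimage, Set.mem_compl_iff, hInj_def, Set.mem_setOf_eq,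
          Function.Injective, not_forall] at hω
        obtain ⟨a, b, hab, hne⟩ := hω
        exact Set.mem_iUnion.mpr ⟨a, Set.mem_iUnion.mpr ⟨b, hne, hab⟩⟩
      refine measure_mono_null hsub
        (measure_iUnion_null fun i => measure_iUnion_null fun j => ?_)
      by_cases hij : i = j
      · have h0 : {ω : Ω | i ≠ j ∧ W i ω = W j ω} = ∅ := by ext ω; simp [hij]
        simp [h0]
      · exact measure_mono_null (fun ω h => h.2) (hties i j hij)
    have hμInj : μ Inj = 1 := by
      have h := measure_add_measure_compl (μ := μ) measurableSet_inj
      rw [hInjc, add_zero, measure_univ] at h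
      exact h
    -- exchangeability: all ranks equally likely
    have hDswap : ∀ j (m : Fin (n+1)), μ (D j m) = μ (D j (Fin.last n)) := by
      intro j m
      set e := Equiv.swap m (Fin.last n) with he_def
      have h1 : μ (D j m) = P ((fun ω i => W (e i) ω) ⁻¹' D j m) := by
        rw [← hjoint e,
          Measure.map_apply (measurable_pi_lambda _ fun i => hWmeas (e i)) (hDmeas j m)]
      have h2 : (fun ω i => W (e i) ω) ⁻¹' D j m = Wvec ⁻¹' D j (Fin.last n) := by
        ext ω
        simp only [Set.mem_preimage]
        have hcomp : (fun i => W (e i) ω) = (Wvec ω) ∘ e := rfl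
        rw [hcomp, hD_def]
        simp only [Set.mem_inter_iff, Set.mem_setOf_eq, hInj_def]
        rw [rankN_comp (Wvec ω) e m, Equiv.injective_comp, he_def, Equiv.swap_apply_left]
      rw [h1, h2, ← Measure.map_apply hWvec_meas (hDmeas j (Fin.last n)), hjoint0]
    have hdisj : ∀ j, Pairwise (Function.onFun Disjoint (D j)) := by
      intro j m m' hmm'
      refine Set.disjoint_left.mpr fun v hv hv' => hmm' ?_
      have hval : rankF v m = rankF v m' := Fin.ext (hv.2.trans hv'.2.symm)
      exact (rankF_bijective hv.1).1 hval
    have hcover : ∀ j, j ≤ n → (⋃ m, D j m) = Inj := by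
      intro j hj
      apply Set.Subset.antisymm
      · exact Set.iUnion_subset fun m => Set.inter_subset_left
      · intro v hv
        obtain ⟨m, hm⟩ := (rankF_bijective hv).2 ⟨j, Nat.lt_succ_of_le hj⟩
        exact Set.mem_iUnion.mpr ⟨m, hv, congrArg Fin.val hm⟩
    have hDval : ∀ j, j ≤ n → μ (D j (Fin.last n)) = ((n+1 : ℕ) : ℝ≥0∞)⁻¹ := by
      intro j hj
      have hsum := measure_iUnion (μ := μ) (hdisj j) (hDmeas j)
      rw [hcover j hj, hμInj, tsum_fintype] at hsum
      have hsum2 : ∑ m : Fin (n+1), μ (D j m)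
          = ((n+1 : ℕ) : ℝ≥0∞) * μ (D j (Fin.last n)) := by
        rw [Finset.sum_congr rfl (fun m _ => hDswap j m), Finset.sum_const,
          Finset.card_univ, Fintype.card_fin, nsmul_eq_mul]
      rw [hsum2] at hsum
      have hne : ((n+1 : ℕ) : ℝ≥0∞) ≠ 0 := by simp
      have hnt : ((n+1 : ℕ) : ℝ≥0∞) ≠ ⊤ := by simp
      calc μ (D j (Fin.last n))
          = ((n+1 : ℕ) : ℝ≥0∞)⁻¹ * (((n+1 : ℕ) : ℝ≥0∞) * μ (D j (Fin.last n))) := by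
            rw [← mul_assoc, ENNReal.inv_mul_cancel hne hnt, one_mul]
        _ = ((n+1 : ℕ) : ℝ≥0∞)⁻¹ := by rw [← hsum, mul_one]
    -- the union over ranks below k
    have hBdisj : (↑(Finset.range k) : Set ℕ).PairwiseDisjoint
        (fun j => D j (Fin.last n)) := by
      intro j _ j' _ hjj'
      exact Set.disjoint_left.mpr fun v hv hv' => hjj' (hv.2.symm.trans hv'.2)
    have hμB : μ (⋃ j ∈ Finset.range k, D j (Fin.last n))
        = (k : ℝ≥0∞) * ((n+1 : ℕ) : ℝ≥0∞)⁻¹ := by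
      rw [measure_biUnion_finset hBdisj (fun j _ => hDmeas j _)]
      rw [Finset.sum_congr rfl
        (fun j hj => hDval j (by have := Finset.mem_range.mp hj; omega))]
      rw [Finset.sum_const, Finset.card_range, nsmul_eq_mul]
    -- pointwise inclusion into the target event
    have hsubset : Wvec ⁻¹' (⋃ j ∈ Finset.range k, D j (Fin.last n)) ⊆
        {ω : Ω | S ((Z (Fin.last n) ω).1 + δ) (Z (Fin.last n) ω).2 ≤
          orderStat' (fun i : Fin n => robustScore S ε (Z (Fin.castSucc i) ω))
            ⟨k - 1, by omega⟩} := by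
      intro ω hω
      simp only [Set.mem_preimage, Set.mem_iUnion] at hω
      obtain ⟨j, hj, hmem⟩ := hω
      have hjk : j < k := Finset.mem_range.mp hj
      have hrank : rankN (Wvec ω) (Fin.last n) = j := hmem.2
      have hcount :
          (Finset.univ.filter
            (fun i : Fin n => (Wvec ω) i.castSucc < (Wvec ω) (Fin.last n))).card ≤ k - 1 := by
        rw [← rankN_last, hrank]; omega
      have hkn' : k - 1 < n := by omega
      have hle := le_orderStat_of_card_le (fun i : Fin n => (Wvec ω) i.castSucc)
        ((Wvec ω) (Fin.last n)) (k-1) hkn' hcount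
      refine Set.mem_setOf_eq ▸ le_trans ?_ hle
      have hmem' : (Z (Fin.last n) ω).1 + δ
          ∈ Metric.closedBall (Z (Fin.last n) ω).1 ε := by
        rw [Metric.mem_closedBall, dist_eq_norm]
        simpa using hδ
      exact le_csSup (hbdd (Z (Fin.last n) ω).1 (Z (Fin.last n) ω).2) ⟨_, hmem', rfl⟩
    -- putting everything together
    have hPT : (k : ℝ≥0∞) * ((n+1 : ℕ) : ℝ≥0∞)⁻¹
        ≤ P {ω : Ω | S ((Z (Fin.last n) ω).1 + δ) (Z (Fin.last n) ω).2 ≤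
          orderStat' (fun i : Fin n => robustScore S ε (Z (Fin.castSucc i) ω))
            ⟨k - 1, by omega⟩} := by
      rw [← hμB, ← hjoint0,
        Measure.map_apply hWvec_meas (Finset.measurableSet_biUnion _ (fun j _ => hDmeas j _))]
      exact measure_mono hsubset
    have h1 : ((k : ℝ≥0∞) * ((n+1 : ℕ) : ℝ≥0∞)⁻¹).toReal = (k : ℝ) / ((n : ℝ) + 1) := by
      rw [ENNReal.toReal_mul, ENNReal.toReal_inv, div_eq_mul_inv,
        ENNReal.toReal_natCast, ENNReal.toReal_natCast]
      push_cast
      ring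
    have h2 : (1:ℝ) - α ≤ (k:ℝ)/((n:ℝ)+1) := by
      rw [le_div_iff₀ (by positivity)]
      rw [hk_def]
      exact Nat.le_ceil _
    calc (1:ℝ) - α ≤ (k:ℝ)/((n:ℝ)+1) := h2
      _ = ((k : ℝ≥0∞) * ((n+1 : ℕ) : ℝ≥0∞)⁻¹).toReal := h1.symm
      _ ≤ _ := ENNReal.toReal_mono (measure_ne_top P _) hPT
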